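/- Unbiasedness of the similar–dissimilar (SD) risk (Theorem 1, second identity): for every measurable f : ℝ^d → ℝ satisfying the integrability assumption, R(f) = π_S·∫ (L(f(x),+1) + L(f(x'),+1))/2 dμ_S(x,x') + π_D·∫ (L(f(x),−1) + L(f(x'),−1))/2 dμ_D(x,x'). -/

import Mathlib

open MeasureTheory
open scoped ENNReal

lemma int_avg {α : Type*} [MeasurableSpace α] (μ ν : Measure α)
    [IsProbabilityMeasure μ] [IsProbabilityMeasure ν] (g : α → ℝ)
    (hgμ : Integrable g μ) (hgν : Integrable g ν) :
    ∫ p : α × α, (g p.1 + g p.2) / 2 ∂(μ.prod ν)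
      = ((∫ x, g x ∂μ) + ∫ x, g x ∂ν) / 2 := by
  have h1 : Integrable (fun p : α × α => g p.1) (μ.prod ν) := by
    have := hgμ.mul_prod (integrable_const (1 : ℝ) (μ := ν))
    simpa using this
  have h2 : Integrable (fun p : α × α => g p.2) (μ.prod ν) := by
    have := (integrable_const (1 : ℝ) (μ := μ)).mul_prod hgν
    simpa using this
  simp_rw [add_div]
  rw [integral_add (h1.div_const 2) (h2.div_const 2)]
  simp_rw [div_eq_mul_inv, integral_mul_const]
  rw [integral_fun_fst, integral_fun_snd]
  simp

/-- Unbiasedness of the similar–dissimilar (SD) risk (Theorem 1, second identity). -/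
theorem sd_risk_unbiased {d : ℕ} (hd : 1 ≤ d)
    (μp μm : Measure (Fin d → ℝ)) [IsProbabilityMeasure μp] [IsProbabilityMeasure μm]
    (πp πm : ℝ) (hπp : πp ∈ Set.Ioo (0 : ℝ) 1) (hπm : πm = 1 - πp) (hne : πp ≠ πm)
    (πS πD : ℝ) (hπS : πS = πp ^ 2 + πm ^ 2) (hπD : πD = 2 * πp * πm)
    (μS : Measure ((Fin d → ℝ) × (Fin d → ℝ)))
    (hμS : μS = ENNReal.ofReal (πp ^ 2 / πS) • (μp.prod μp)
        + ENNReal.ofReal (πm ^ 2 / πS) • (μm.prod μm))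
    (μD : Measure ((Fin d → ℝ) × (Fin d → ℝ)))
    (hμD : μD = ((1 : ℝ≥0∞) / 2) • (μp.prod μm) + ((1 : ℝ≥0∞) / 2) • (μm.prod μp))
    (ℓ : ℝ → ℝ → ℝ) (hℓ : ∀ z t, 0 ≤ ℓ z t)
    (L : ℝ → ℝ → ℝ) (hL : ∀ z t, L z t = (πp * ℓ z t - πm * ℓ z (-t)) / (πp - πm))
    (f : (Fin d → ℝ) → ℝ) (hf : Measurable f)
    (hintp : ∀ t ∈ ({1, -1} : Set ℝ), Integrable (fun x => ℓ (f x) t) μp)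
    (hintm : ∀ t ∈ ({1, -1} : Set ℝ), Integrable (fun x => ℓ (f x) t) μm) :
    πp * ∫ x, ℓ (f x) 1 ∂μp + πm * ∫ x, ℓ (f x) (-1) ∂μm
      = πS * ∫ p, (L (f p.1) 1 + L (f p.2) 1) / 2 ∂μS
        + πD * ∫ p, (L (f p.1) (-1) + L (f p.2) (-1)) / 2 ∂μD := by
  obtain ⟨hπp0, hπp1⟩ := hπp
  have hπm0 : 0 < πm := by rw [hπm]; linarith
  have hδ : πp - πm ≠ 0 := sub_ne_zero.mpr hne
  have hπS0 : 0 < πS := by rw [hπS]; positivity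
  -- integrability of base losses
  have hp1 := hintp 1 (by simp)
  have hp2 := hintp (-1) (by simp)
  have hm1 := hintm 1 (by simp)
  have hm2 := hintm (-1) (by simp)
  -- integrability of corrected losses
  have hLfun : ∀ t : ℝ, (fun x => L (f x) t)
      = fun x => (πp * ℓ (f x) t - πm * ℓ (f x) (-t)) / (πp - πm) := by
    intro t; funext x; rw [hL]
  have hLp1 : Integrable (fun x => L (f x) 1) μp := by
    rw [hLfun]; exact ((hp1.const_mul πp).sub (hp2.const_mul πm)).div_const _
  have hLm1 : Integrable (fun x => L (f x) 1) μm := by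
    rw [hLfun]; exact ((hm1.const_mul πp).sub (hm2.const_mul πm)).div_const _
  have hLp2 : Integrable (fun x => L (f x) (-1)) μp := by
    rw [hLfun]
    exact ((hp2.const_mul πp).sub ((by simpa using hp1 : Integrable
      (fun x => ℓ (f x) (-(-1))) μp).const_mul πm)).div_const _
  have hLm2 : Integrable (fun x => L (f x) (-1)) μm := by
    rw [hLfun]
    exact ((hm2.const_mul πp).sub ((by simpa using hm1 : Integrable
      (fun x => ℓ (f x) (-(-1))) μm).const_mul πm)).div_const _
  -- integrals of corrected losses
  set a := ∫ x, ℓ (f x) 1 ∂μp with ha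
  set b := ∫ x, ℓ (f x) (-1) ∂μp with hb
  set c := ∫ x, ℓ (f x) 1 ∂μm with hc
  set e := ∫ x, ℓ (f x) (-1) ∂μm with he
  have hIp1 : ∫ x, L (f x) 1 ∂μp = (πp * a - πm * b) / (πp - πm) := by
    rw [hLfun]
    rw [integral_div, integral_sub (hp1.const_mul πp) (hp2.const_mul πm),
      integral_const_mul, integral_const_mul]
  have hIm1 : ∫ x, L (f x) 1 ∂μm = (πp * c - πm * e) / (πp - πm) := by
    rw [hLfun]
    rw [integral_div, integral_sub (hm1.const_mul πp) (hm2.const_mul πm),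
      integral_const_mul, integral_const_mul]
  have hIp2 : ∫ x, L (f x) (-1) ∂μp = (πp * b - πm * a) / (πp - πm) := by
    rw [hLfun]
    rw [integral_div, integral_sub (hp2.const_mul πp)
      ((by simpa using hp1 : Integrable (fun x => ℓ (f x) (-(-1))) μp).const_mul πm),
      integral_const_mul, integral_const_mul]
    norm_num
    rfl
  have hIm2 : ∫ x, L (f x) (-1) ∂μm = (πp * e - πm * c) / (πp - πm) := by
    rw [hLfun]
    rw [integral_div, integral_sub (hm2.const_mul πp)
      ((by simpa using hm1 : Integrable (fun x => ℓ (f x) (-(-1))) μm).const_mul πm),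
      integral_const_mul, integral_const_mul]
    norm_num
    rfl
  -- integrals over product measures
  have hSint : ∫ p, (L (f p.1) 1 + L (f p.2) 1) / 2 ∂μS
      = πp ^ 2 / πS * ((πp * a - πm * b) / (πp - πm))
        + πm ^ 2 / πS * ((πp * c - πm * e) / (πp - πm)) := by
    rw [hμS]
    rw [integral_add_measure
      ((by
        exact Integrable.smul_measure (by
          have h1 : Integrable (fun p : (Fin d → ℝ) × (Fin d → ℝ) => L (f p.1) 1) (μp.prod μp) := by
            have := hLp1.mul_prod (integrable_const (1 : ℝ) (μ := μp)); simpa using this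
          have h2 : Integrable (fun p : (Fin d → ℝ) × (Fin d → ℝ) => L (f p.2) 1) (μp.prod μp) := by
            have := (integrable_const (1 : ℝ) (μ := μp)).mul_prod hLp1; simpa using this
          exact (h1.add h2).div_const 2) ENNReal.ofReal_ne_top))
      (by
        exact Integrable.smul_measure (by
          have h1 : Integrable (fun p : (Fin d → ℝ) × (Fin d → ℝ) => L (f p.1) 1) (μm.prod μm) := by
            have := hLm1.mul_prod (integrable_const (1 : ℝ) (μ := μm)); simpa using this
          have h2 : Integrable (fun p : (Fin d → ℝ) × (Fin d → ℝ) => L (f p.2) 1) (μm.prod μm) := by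
            have := (integrable_const (1 : ℝ) (μ := μm)).mul_prod hLm1; simpa using this
          exact (h1.add h2).div_const 2) ENNReal.ofReal_ne_top)]
    rw [integral_smul_measure, integral_smul_measure]
    rw [int_avg μp μp _ hLp1 hLp1, int_avg μm μm _ hLm1 hLm1]
    rw [ENNReal.toReal_ofReal (by positivity), ENNReal.toReal_ofReal (by positivity)]
    rw [hIp1, hIm1]
    simp [smul_eq_mul]
  have hDint : ∫ p, (L (f p.1) (-1) + L (f p.2) (-1)) / 2 ∂μD
      = (1 / 2 : ℝ) * (((πp * b - πm * a) / (πp - πm) + (πp * e - πm * c) / (πp - πm)) / 2)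
        + (1 / 2 : ℝ) * (((πp * e - πm * c) / (πp - πm) + (πp * b - πm * a) / (πp - πm)) / 2) := by
    rw [hμD]
    rw [integral_add_measure
      (by
        exact Integrable.smul_measure (by
          have h1 : Integrable (fun p : (Fin d → ℝ) × (Fin d → ℝ) => L (f p.1) (-1)) (μp.prod μm) := by
            have := hLp2.mul_prod (integrable_const (1 : ℝ) (μ := μm)); simpa using this
          have h2 : Integrable (fun p : (Fin d → ℝ) × (Fin d → ℝ) => L (f p.2) (-1)) (μp.prod μm) := by
            have := (integrable_const (1 : ℝ) (μ := μp)).mul_prod hLm2; simpa using this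
          exact (h1.add h2).div_const 2) (by norm_num))
      (by
        exact Integrable.smul_measure (by
          have h1 : Integrable (fun p : (Fin d → ℝ) × (Fin d → ℝ) => L (f p.1) (-1)) (μm.prod μp) := by
            have := hLm2.mul_prod (integrable_const (1 : ℝ) (μ := μp)); simpa using this
          have h2 : Integrable (fun p : (Fin d → ℝ) × (Fin d → ℝ) => L (f p.2) (-1)) (μm.prod μp) := by
            have := (integrable_const (1 : ℝ) (μ := μm)).mul_prod hLp2; simpa using this
          exact (h1.add h2).div_const 2) (by norm_num))]
    rw [integral_smul_measure, integral_smul_measure]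
    rw [int_avg μp μm _ hLp2 hLm2, int_avg μm μp _ hLm2 hLp2]
    rw [hIp2, hIm2]
    norm_num
  rw [hSint, hDint, hπS, hπD, hπm]
  have h1 : πp - (1 - πp) ≠ 0 := by rw [hπm] at hδ; exact hδ
  field_simp
  ring
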